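/- arXiv:2102.08164 — 3 statements merged into one kernel-verified Lean document; each statement's English description precedes it below -/
import Mathlib

section
/- If f : ℝ → ℝ is continuously differentiable and f' is Lipschitz continuous with constant L, then for any x₁, x₂, x₃, x₄ ∈ ℝ there exists ξ in the closed interval [min(x₁,x₂,x₃,x₄), max(x₁,x₂,x₃,x₄)] and a remainder R such that f(x₁) - f(x₂) - f(x₃) + f(x₄) = (x₁ - x₂ - x₃ + x₄)·f'(ξ) + R, with |R| ≤ (L/2)·(|x₁-x₂| + |x₃-x₄|)·(|x₁-x₃| + |x₂-x₄|). -/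
open Real

lemma seg_mem_aux (a b τ : ℝ) (h0 : 0 ≤ τ) (h1 : τ ≤ 1) :
    min a b ≤ a + τ * (b - a) ∧ a + τ * (b - a) ≤ max a b := by
  rcases le_total a b with h | h
  · constructor
    · have := min_le_left a b; nlinarith
    · have := le_max_right a b; nlinarith
  · constructor
    · have := min_le_right a b; nlinarith
    · have := le_max_left a b; nlinarith

theorem stmt_0 (f : ℝ → ℝ) (L : ℝ) (hf : ContDiff ℝ 1 f)
    (hL : ∀ x y : ℝ, |deriv f x - deriv f y| ≤ L * |x - y|)
    (x₁ x₂ x₃ x₄ : ℝ) :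
    ∃ ξ ∈ Set.Icc (min (min x₁ x₂) (min x₃ x₄)) (max (max x₁ x₂) (max x₃ x₄)),
      ∃ R : ℝ,
        f x₁ - f x₂ - f x₃ + f x₄ = (x₁ - x₂ - x₃ + x₄) * deriv f ξ + R ∧
        |R| ≤ L / 2 * (|x₁ - x₂| + |x₃ - x₄|) * (|x₁ - x₃| + |x₂ - x₄|) := by
  have hd : Differentiable ℝ f := hf.differentiable one_ne_zero
  have hL0 : 0 ≤ L := by
    have h := hL 0 1
    have h2 : (0:ℝ) ≤ |deriv f 0 - deriv f 1| := abs_nonneg _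
    norm_num at h
    linarith
  set F : ℝ → ℝ := fun t => f (x₂ + t * (x₁ - x₂)) - f (x₄ + t * (x₃ - x₄)) with hFdef
  have hF : ∀ t : ℝ, HasDerivAt F
      ((x₁ - x₂) * deriv f (x₂ + t * (x₁ - x₂)) - (x₃ - x₄) * deriv f (x₄ + t * (x₃ - x₄))) t := by
    intro t
    have h1 : HasDerivAt (fun s : ℝ => x₂ + s * (x₁ - x₂)) (x₁ - x₂) t := by
      simpa using ((hasDerivAt_id t).mul_const (x₁ - x₂)).const_add x₂
    have h2 : HasDerivAt (fun s : ℝ => x₄ + s * (x₃ - x₄)) (x₃ - x₄) t := by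
      simpa using ((hasDerivAt_id t).mul_const (x₃ - x₄)).const_add x₄
    have g1 := ((hd (x₂ + t * (x₁ - x₂))).hasDerivAt).comp t h1
    have g2 := ((hd (x₄ + t * (x₃ - x₄))).hasDerivAt).comp t h2
    have := g1.sub g2
    exact this.congr_deriv (by ring)
  obtain ⟨τ, hτmem, hτeq⟩ := exists_hasDerivAt_eq_slope F
      (fun t => (x₁ - x₂) * deriv f (x₂ + t * (x₁ - x₂)) - (x₃ - x₄) * deriv f (x₄ + t * (x₃ - x₄)))
      one_pos
      (by
        apply Continuous.continuousOn
        have : Continuous F := by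
          apply Continuous.sub
          · exact hf.continuous.comp (by continuity)
          · exact hf.continuous.comp (by continuity)
        exact this)
      (fun t _ => hF t)
  have hτ0 : 0 ≤ τ := le_of_lt hτmem.1
  have hτ1 : τ ≤ 1 := le_of_lt hτmem.2
  have e1 : x₂ + (1:ℝ) * (x₁ - x₂) = x₁ := by ring
  have e2 : x₄ + (1:ℝ) * (x₃ - x₄) = x₃ := by ring
  have e3 : x₂ + (0:ℝ) * (x₁ - x₂) = x₂ := by ring
  have e4 : x₄ + (0:ℝ) * (x₃ - x₄) = x₄ := by ring
  have hF1 : F 1 = f x₁ - f x₃ := by rw [hFdef]; simp only [e1, e2]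
  have hF0 : F 0 = f x₂ - f x₄ := by rw [hFdef]; simp only [e3, e4]
  rw [hF1, hF0] at hτeq
  norm_num at hτeq
  -- hτeq : (x₁-x₂) * f'(ξ₁) - (x₃-x₄) * f'(ξ₂) = f x₁ - f x₃ - (f x₂ - f x₄)
  set ξ₁ := x₂ + τ * (x₁ - x₂) with hxi1
  set ξ₂ := x₄ + τ * (x₃ - x₄) with hxi2
  have hdist : |ξ₁ - ξ₂| ≤ |x₁ - x₃| + |x₂ - x₄| := by
    have hrw : ξ₁ - ξ₂ = (1 - τ) * (x₂ - x₄) + τ * (x₁ - x₃) := by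
      rw [hxi1, hxi2]; ring
    rw [hrw]
    calc |(1 - τ) * (x₂ - x₄) + τ * (x₁ - x₃)|
        ≤ |(1 - τ) * (x₂ - x₄)| + |τ * (x₁ - x₃)| := abs_add_le _ _
      _ = (1 - τ) * |x₂ - x₄| + τ * |x₁ - x₃| := by
          rw [abs_mul, abs_mul, abs_of_nonneg (by linarith : (0:ℝ) ≤ 1 - τ),
            abs_of_nonneg hτ0]
      _ ≤ |x₁ - x₃| + |x₂ - x₄| := by
          nlinarith [abs_nonneg (x₂ - x₄), abs_nonneg (x₁ - x₃)]
  have hmem1 := seg_mem_aux x₂ x₁ τ hτ0 hτ1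
  have hmem2 := seg_mem_aux x₄ x₃ τ hτ0 hτ1
  have hkey : |deriv f ξ₁ - deriv f ξ₂| ≤ L * (|x₁ - x₃| + |x₂ - x₄|) := by
    calc |deriv f ξ₁ - deriv f ξ₂| ≤ L * |ξ₁ - ξ₂| := hL _ _
      _ ≤ L * (|x₁ - x₃| + |x₂ - x₄|) := by
          exact mul_le_mul_of_nonneg_left hdist hL0
  rcases le_total |x₃ - x₄| |x₁ - x₂| with hcase | hcase
  · refine ⟨ξ₁, ⟨?_, ?_⟩, (x₃ - x₄) * (deriv f ξ₁ - deriv f ξ₂), ?_, ?_⟩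
    · exact le_trans (min_le_left _ _) (by rw [min_comm]; exact hmem1.1)
    · exact le_trans (by rw [max_comm x₁ x₂]; exact hmem1.2) (le_max_left _ _)
    · linear_combination -hτeq
    · rw [abs_mul]
      calc |x₃ - x₄| * |deriv f ξ₁ - deriv f ξ₂|
          ≤ |x₃ - x₄| * (L * (|x₁ - x₃| + |x₂ - x₄|)) :=
            mul_le_mul_of_nonneg_left hkey (abs_nonneg _)
        _ ≤ L / 2 * (|x₁ - x₂| + |x₃ - x₄|) * (|x₁ - x₃| + |x₂ - x₄|) := by
            nlinarith [mul_nonneg (mul_nonneg hL0 (sub_nonneg.2 hcase))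
              (add_nonneg (abs_nonneg (x₁ - x₃)) (abs_nonneg (x₂ - x₄)))]
  · refine ⟨ξ₂, ⟨?_, ?_⟩, (x₁ - x₂) * (deriv f ξ₁ - deriv f ξ₂), ?_, ?_⟩
    · exact le_trans (min_le_right _ _) (by rw [min_comm]; exact hmem2.1)
    · exact le_trans (by rw [max_comm x₃ x₄]; exact hmem2.2) (le_max_right _ _)
    · linear_combination -hτeq
    · rw [abs_mul]
      calc |x₁ - x₂| * |deriv f ξ₁ - deriv f ξ₂|
          ≤ |x₁ - x₂| * (L * (|x₁ - x₃| + |x₂ - x₄|)) :=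
            mul_le_mul_of_nonneg_left hkey (abs_nonneg _)
        _ ≤ L / 2 * (|x₁ - x₂| + |x₃ - x₄|) * (|x₁ - x₃| + |x₂ - x₄|) := by
            nlinarith [mul_nonneg (mul_nonneg hL0 (sub_nonneg.2 hcase))
              (add_nonneg (abs_nonneg (x₁ - x₃)) (abs_nonneg (x₂ - x₄)))]
end

section
/- Let V_ℓ, C_ℓ, Ṽ_ℓ, C̃_ℓ > 0 for ℓ = 0,...,L and ε > 0. Then 2ε⁻²·(Σ_{ℓ=0}^{L} √(C̃_ℓ V_ℓ) + √((C_ℓ + C̃_ℓ)·Ṽ_ℓ))² ≤ [2ε⁻²·(Σ_{ℓ=0}^{L} √(C_ℓ V_ℓ))²] · max_{0≤ℓ≤L} (C̃_ℓ/C_ℓ)·(1 + √((C_ℓ/C̃_ℓ + 1)·(Ṽ_ℓ/V_ℓ)))². -/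
open Finset

theorem stmt_5 (L : ℕ) (V C Vt Ct : ℕ → ℝ) (ε : ℝ) (hε : 0 < ε)
    (hV : ∀ ℓ ≤ L, 0 < V ℓ) (hC : ∀ ℓ ≤ L, 0 < C ℓ)
    (hVt : ∀ ℓ ≤ L, 0 < Vt ℓ) (hCt : ∀ ℓ ≤ L, 0 < Ct ℓ) :
    2 * ε⁻¹ ^ 2 *
        (∑ ℓ ∈ Finset.range (L + 1),
          (Real.sqrt (Ct ℓ * V ℓ) + Real.sqrt ((C ℓ + Ct ℓ) * Vt ℓ))) ^ 2
      ≤ (2 * ε⁻¹ ^ 2 * (∑ ℓ ∈ Finset.range (L + 1), Real.sqrt (C ℓ * V ℓ)) ^ 2) *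
          (Finset.range (L + 1)).sup' Finset.nonempty_range_add_one
            (fun ℓ => Ct ℓ / C ℓ *
              (1 + Real.sqrt ((C ℓ / Ct ℓ + 1) * (Vt ℓ / V ℓ))) ^ 2) := by
  set f : ℕ → ℝ := fun ℓ => Ct ℓ / C ℓ *
      (1 + Real.sqrt ((C ℓ / Ct ℓ + 1) * (Vt ℓ / V ℓ))) ^ 2 with hf
  set M : ℝ := (Finset.range (L + 1)).sup' Finset.nonempty_range_add_one f with hMdef
  have hM0 : 0 ≤ M := by
    refine le_trans ?_ (Finset.le_sup' f (Finset.mem_range.mpr (Nat.succ_pos L)))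
    have := hC 0 (Nat.zero_le L); have := hCt 0 (Nat.zero_le L)
    positivity
  have key : ∀ ℓ ∈ Finset.range (L + 1),
      Real.sqrt (Ct ℓ * V ℓ) + Real.sqrt ((C ℓ + Ct ℓ) * Vt ℓ)
        = Real.sqrt (C ℓ * V ℓ) * Real.sqrt (f ℓ) := by
    intro ℓ hℓ
    rw [Finset.mem_range, Nat.lt_succ_iff] at hℓ
    have hv := hV ℓ hℓ; have hc := hC ℓ hℓ; have hvt := hVt ℓ hℓ; have hct := hCt ℓ hℓ
    have h1 : (0:ℝ) ≤ 1 + Real.sqrt ((C ℓ / Ct ℓ + 1) * (Vt ℓ / V ℓ)) := by positivity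
    rw [hf]
    simp only []
    rw [Real.sqrt_mul (show (0:ℝ) ≤ Ct ℓ / C ℓ by positivity)
        ((1 + Real.sqrt ((C ℓ / Ct ℓ + 1) * (Vt ℓ / V ℓ))) ^ 2),
      Real.sqrt_sq h1,
      show Real.sqrt (C ℓ * V ℓ) * (Real.sqrt (Ct ℓ / C ℓ) *
          (1 + Real.sqrt ((C ℓ / Ct ℓ + 1) * (Vt ℓ / V ℓ))))
        = Real.sqrt (C ℓ * V ℓ) * Real.sqrt (Ct ℓ / C ℓ) *
          (1 + Real.sqrt ((C ℓ / Ct ℓ + 1) * (Vt ℓ / V ℓ))) from (mul_assoc _ _ _).symm,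
      ← Real.sqrt_mul (by positivity) (Ct ℓ / C ℓ)]
    have hcv : C ℓ * V ℓ * (Ct ℓ / C ℓ) = Ct ℓ * V ℓ := by field_simp
    rw [hcv, mul_add, mul_one, ← Real.sqrt_mul (by positivity) _]
    have : Ct ℓ * V ℓ * ((C ℓ / Ct ℓ + 1) * (Vt ℓ / V ℓ)) = (C ℓ + Ct ℓ) * Vt ℓ := by
      field_simp
    rw [this]
  have hsum : (∑ ℓ ∈ Finset.range (L + 1),
      (Real.sqrt (Ct ℓ * V ℓ) + Real.sqrt ((C ℓ + Ct ℓ) * Vt ℓ)))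
      ≤ (∑ ℓ ∈ Finset.range (L + 1), Real.sqrt (C ℓ * V ℓ)) * Real.sqrt M := by
    rw [Finset.sum_mul]
    refine Finset.sum_le_sum fun ℓ hℓ => ?_
    rw [key ℓ hℓ]
    exact mul_le_mul_of_nonneg_left
      (Real.sqrt_le_sqrt (Finset.le_sup' f hℓ)) (Real.sqrt_nonneg _)
  have hL0 : 0 ≤ ∑ ℓ ∈ Finset.range (L + 1),
      (Real.sqrt (Ct ℓ * V ℓ) + Real.sqrt ((C ℓ + Ct ℓ) * Vt ℓ)) :=
    Finset.sum_nonneg fun ℓ _ => by positivity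
  have hsq : (∑ ℓ ∈ Finset.range (L + 1),
      (Real.sqrt (Ct ℓ * V ℓ) + Real.sqrt ((C ℓ + Ct ℓ) * Vt ℓ))) ^ 2
      ≤ (∑ ℓ ∈ Finset.range (L + 1), Real.sqrt (C ℓ * V ℓ)) ^ 2 * M := by
    calc _ ≤ ((∑ ℓ ∈ Finset.range (L + 1), Real.sqrt (C ℓ * V ℓ)) * Real.sqrt M) ^ 2 :=
          pow_le_pow_left₀ hL0 hsum 2
      _ = (∑ ℓ ∈ Finset.range (L + 1), Real.sqrt (C ℓ * V ℓ)) ^ 2 * M := by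
          rw [mul_pow, Real.sq_sqrt hM0]
  calc 2 * ε⁻¹ ^ 2 * (∑ ℓ ∈ Finset.range (L + 1),
        (Real.sqrt (Ct ℓ * V ℓ) + Real.sqrt ((C ℓ + Ct ℓ) * Vt ℓ))) ^ 2
      ≤ 2 * ε⁻¹ ^ 2 * ((∑ ℓ ∈ Finset.range (L + 1), Real.sqrt (C ℓ * V ℓ)) ^ 2 * M) :=
        mul_le_mul_of_nonneg_left hsq (by positivity)
    _ = (2 * ε⁻¹ ^ 2 * (∑ ℓ ∈ Finset.range (L + 1), Real.sqrt (C ℓ * V ℓ)) ^ 2) * M := by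
        ring
end

section
/- Let f : ℝ → ℝ be C¹ with |f(x) - f(y)| ≤ L_f·(1 + |x|^r + |y|^r)·|x - y| and |f'(x) - f'(y)| ≤ L'_f·(1 + |x|^r + |y|^r)·|x - y| for all x, y, for some r > 0. Then for any x₁, x₂, x₃, x₄ ∈ ℝ there exists ξ in the convex hull of {x₁, x₂, x₃, x₄} such that f(x₁) - f(x₂) - f(x₃) + f(x₄) = (x₁ - x₂ - x₃ + x₄)·f'(ξ) + R, where |R| ≤ (L'_f/2)·(1 + |x₁|^r + |x₂|^r + |x₃|^r + |x₄|^r)·(|x₁ - x₂| + |x₃ - x₄|)·(|x₁ - x₃| + |x₂ - x₄|) and |f'(ξ)| ≤ L_f·(1 + |x₁|^r + |x₂|^r + |x₃|^r + |x₄|^r). -/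
open Real Set Filter Topology

private lemma aux_rpow (r : ℝ) (hr : 0 ≤ r) {A v w : ℝ} (h1 : min v w ≤ A) (h2 : A ≤ max v w) :
    |A| ^ r ≤ |v| ^ r + |w| ^ r := by
  have hA : |A| ≤ max |v| |w| := by
    rcases le_total v w with h | h
    · rw [min_eq_left h] at h1; rw [max_eq_right h] at h2
      exact abs_le_max_abs_abs h1 h2
    · rw [min_eq_right h] at h1; rw [max_eq_left h] at h2
      rw [max_comm]
      exact abs_le_max_abs_abs h1 h2
  rcases le_total |v| |w| with h | h
  · calc |A| ^ r ≤ |w| ^ r :=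
        Real.rpow_le_rpow (abs_nonneg _) (hA.trans_eq (max_eq_right h)) hr
      _ ≤ _ := le_add_of_nonneg_left (Real.rpow_nonneg (abs_nonneg _) _)
  · calc |A| ^ r ≤ |v| ^ r :=
        Real.rpow_le_rpow (abs_nonneg _) (hA.trans_eq (max_eq_left h)) hr
      _ ≤ _ := le_add_of_nonneg_right (Real.rpow_nonneg (abs_nonneg _) _)

private lemma aux_mem (c d t : ℝ) (h0 : 0 ≤ t) (h1 : t ≤ 1) :
    min c d ≤ c + t * (d - c) ∧ c + t * (d - c) ≤ max c d := by
  rcases le_total c d with h | h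
  · rw [min_eq_left h, max_eq_right h]
    constructor <;> nlinarith
  · rw [min_eq_right h, max_eq_left h]
    constructor <;> nlinarith

theorem stmt_11 (f : ℝ → ℝ) (Lf Lf' r : ℝ) (hr : 0 < r)
    (hf : ContDiff ℝ 1 f)
    (hLf : ∀ x y : ℝ, |f x - f y| ≤ Lf * (1 + |x| ^ r + |y| ^ r) * |x - y|)
    (hLf' : ∀ x y : ℝ, |deriv f x - deriv f y| ≤ Lf' * (1 + |x| ^ r + |y| ^ r) * |x - y|)
    (x₁ x₂ x₃ x₄ : ℝ) :
    ∃ ξ ∈ Set.Icc (min (min x₁ x₂) (min x₃ x₄)) (max (max x₁ x₂) (max x₃ x₄)),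
      ∃ R : ℝ,
        f x₁ - f x₂ - f x₃ + f x₄ = (x₁ - x₂ - x₃ + x₄) * deriv f ξ + R ∧
        |R| ≤ Lf' / 2 * (1 + |x₁| ^ r + |x₂| ^ r + |x₃| ^ r + |x₄| ^ r) *
                (|x₁ - x₂| + |x₃ - x₄|) * (|x₁ - x₃| + |x₂ - x₄|) ∧
        |deriv f ξ| ≤ Lf * (1 + |x₁| ^ r + |x₂| ^ r + |x₃| ^ r + |x₄| ^ r) := by
  have hr0 : (0:ℝ) ≤ r := hr.le
  have h10 : |(1:ℝ)| ^ r = 1 := by rw [abs_one, one_rpow]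
  have h00 : |(0:ℝ)| ^ r = 0 := by rw [abs_zero, zero_rpow hr.ne']
  have hLf0 : 0 ≤ Lf := by
    have h := hLf 1 0
    rw [h10, h00] at h
    norm_num at h
    linarith [abs_nonneg (f 1 - f 0)]
  have hLf'0 : 0 ≤ Lf' := by
    have h := hLf' 1 0
    rw [h10, h00] at h
    norm_num at h
    linarith [abs_nonneg (deriv f 1 - deriv f 0)]
  have hdf : Differentiable ℝ f := hf.differentiable one_ne_zero
  have hcf' : Continuous (deriv f) := hf.continuous_deriv le_rfl
  -- pointwise derivative bound
  have hderiv : ∀ x : ℝ, |deriv f x| ≤ Lf * (1 + |x| ^ r + |x| ^ r) := by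
    intro x
    have hd : HasDerivAt f (deriv f x) x := (hdf x).hasDerivAt
    have hslope : Tendsto (slope f x) (𝓝[≠] x) (𝓝 (deriv f x)) :=
      hasDerivAt_iff_tendsto_slope.mp hd
    have h1 : Tendsto (fun y => |slope f x y|) (𝓝[≠] x) (𝓝 |deriv f x|) := hslope.abs
    have h2 : Tendsto (fun y : ℝ => Lf * (1 + |x| ^ r + |y| ^ r)) (𝓝[≠] x)
        (𝓝 (Lf * (1 + |x| ^ r + |x| ^ r))) := by
      apply Tendsto.mono_left _ nhdsWithin_le_nhds
      have hc : ContinuousAt (fun y : ℝ => Lf * (1 + |x| ^ r + |y| ^ r)) x := by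
        apply ContinuousAt.mul continuousAt_const
        apply ContinuousAt.add (ContinuousAt.add continuousAt_const continuousAt_const)
        exact (Real.continuousAt_rpow_const _ _ (Or.inr hr0)).comp
          continuous_abs.continuousAt
      exact hc.tendsto
    refine le_of_tendsto_of_tendsto h1 h2 ?_
    filter_upwards [self_mem_nhdsWithin] with y hy
    have hy' : y ≠ x := hy
    have hyx : (0:ℝ) < |y - x| := abs_pos.mpr (sub_ne_zero.mpr hy')
    rw [slope_def_field, abs_div]
    rw [div_le_iff₀ hyx]
    calc |f y - f x| ≤ Lf * (1 + |y| ^ r + |x| ^ r) * |y - x| := hLf y x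
      _ = Lf * (1 + |x| ^ r + |y| ^ r) * |y - x| := by ring
  -- the MVT step
  set g : ℝ → ℝ := fun t => f (x₂ + t * (x₁ - x₂)) - f (x₄ + t * (x₃ - x₄)) with hg_def
  have hg' : ∀ t : ℝ, HasDerivAt g
      ((x₁ - x₂) * deriv f (x₂ + t * (x₁ - x₂)) - (x₃ - x₄) * deriv f (x₄ + t * (x₃ - x₄))) t := by
    intro t
    have h1 : HasDerivAt (fun t : ℝ => x₂ + t * (x₁ - x₂)) (x₁ - x₂) t := by
      simpa using ((hasDerivAt_id t).mul_const (x₁ - x₂)).const_add x₂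
    have h2 : HasDerivAt (fun t : ℝ => x₄ + t * (x₃ - x₄)) (x₃ - x₄) t := by
      simpa using ((hasDerivAt_id t).mul_const (x₃ - x₄)).const_add x₄
    have h3 := ((hdf _).hasDerivAt).comp t h1
    have h4 := ((hdf _).hasDerivAt).comp t h2
    have h5 := h3.sub h4
    rw [mul_comm (deriv f _), mul_comm (deriv f _)] at h5
    exact h5
  have hg_cont : ContinuousOn g (Icc 0 1) :=
    (fun t _ => ((hg' t).continuousAt).continuousWithinAt)
  obtain ⟨t, ht, hteq⟩ := exists_hasDerivAt_eq_slope g _ zero_lt_one hg_cont (fun t _ => hg' t)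
  set A : ℝ := x₂ + t * (x₁ - x₂) with hA_def
  set B : ℝ := x₄ + t * (x₃ - x₄) with hB_def
  have hMVT : (x₁ - x₂) * deriv f A - (x₃ - x₄) * deriv f B
      = f x₁ - f x₂ - f x₃ + f x₄ := by
    have hg1 : g 1 = f x₁ - f x₃ := by
      rw [hg_def]
      norm_num
    have hg0 : g 0 = f x₂ - f x₄ := by
      rw [hg_def]
      norm_num
    rw [hteq, hg1, hg0]
    ring
  -- IVT step
  have hmid : (deriv f A + deriv f B) / 2 ∈ uIcc (deriv f A) (deriv f B) := by
    rcases le_total (deriv f A) (deriv f B) with h | h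
    · rw [uIcc_of_le h]; exact ⟨by linarith, by linarith⟩
    · rw [uIcc_of_ge h]; exact ⟨by linarith, by linarith⟩
  obtain ⟨ξ, hξmem, hξeq⟩ := intermediate_value_uIcc (hcf'.continuousOn) hmid
  -- locate ξ
  have hA_mem := aux_mem x₂ x₁ t ht.1.le ht.2.le
  have hB_mem := aux_mem x₄ x₃ t ht.1.le ht.2.le
  have hξIcc : ξ ∈ Set.Icc (min (min x₁ x₂) (min x₃ x₄)) (max (max x₁ x₂) (max x₃ x₄)) := by
    have h1 : min x₁ x₂ ≤ A := by rw [min_comm]; exact hA_mem.1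
    have h2 : A ≤ max x₁ x₂ := by rw [max_comm]; exact hA_mem.2
    have h3 : min x₃ x₄ ≤ B := by rw [min_comm]; exact hB_mem.1
    have h4 : B ≤ max x₃ x₄ := by rw [max_comm]; exact hB_mem.2
    have l1 := min_le_left (min x₁ x₂) (min x₃ x₄)
    have l2 := min_le_right (min x₁ x₂) (min x₃ x₄)
    have l3 := le_max_left (max x₁ x₂) (max x₃ x₄)
    have l4 := le_max_right (max x₁ x₂) (max x₃ x₄)
    rcases Set.mem_uIcc.mp hξmem with ⟨ha, hb⟩ | ⟨ha, hb⟩ <;>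
      exact ⟨by linarith, by linarith⟩
  refine ⟨ξ, hξIcc, ((x₁ - x₂) + (x₃ - x₄)) / 2 * (deriv f A - deriv f B), ?_, ?_, ?_⟩
  · rw [hξeq]
    linear_combination -hMVT
  · -- bound on R
    have hSA : |A| ^ r ≤ |x₁| ^ r + |x₂| ^ r := by
      have := aux_rpow r hr0 hA_mem.1 hA_mem.2
      calc |A| ^ r ≤ |x₂| ^ r + |x₁| ^ r := this
        _ = |x₁| ^ r + |x₂| ^ r := by ring
    have hSB : |B| ^ r ≤ |x₃| ^ r + |x₄| ^ r := by
      have := aux_rpow r hr0 hB_mem.1 hB_mem.2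
      calc |B| ^ r ≤ |x₄| ^ r + |x₃| ^ r := this
        _ = |x₃| ^ r + |x₄| ^ r := by ring
    have hABd : |A - B| ≤ |x₁ - x₃| + |x₂ - x₄| := by
      have hAB : A - B = (1 - t) * (x₂ - x₄) + t * (x₁ - x₃) := by
        rw [hA_def, hB_def]; ring
      calc |A - B| = |(1 - t) * (x₂ - x₄) + t * (x₁ - x₃)| := by rw [hAB]
        _ ≤ |(1 - t) * (x₂ - x₄)| + |t * (x₁ - x₃)| := abs_add_le _ _
        _ = (1 - t) * |x₂ - x₄| + t * |x₁ - x₃| := by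
            rw [abs_mul, abs_mul, abs_of_nonneg (by linarith [ht.2.le] : (0:ℝ) ≤ 1 - t),
              abs_of_nonneg ht.1.le]
        _ ≤ |x₁ - x₃| + |x₂ - x₄| := by
            nlinarith [abs_nonneg (x₂ - x₄), abs_nonneg (x₁ - x₃), ht.1.le, ht.2.le]
    have hfAB : |deriv f A - deriv f B| ≤
        Lf' * (1 + |x₁| ^ r + |x₂| ^ r + |x₃| ^ r + |x₄| ^ r) * (|x₁ - x₃| + |x₂ - x₄|) := by
      have hnn : (0:ℝ) ≤ 1 + |A| ^ r + |B| ^ r := by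
        have := Real.rpow_nonneg (abs_nonneg A) r
        have := Real.rpow_nonneg (abs_nonneg B) r
        linarith
      calc |deriv f A - deriv f B| ≤ Lf' * (1 + |A| ^ r + |B| ^ r) * |A - B| := hLf' A B
        _ ≤ Lf' * (1 + |x₁| ^ r + |x₂| ^ r + |x₃| ^ r + |x₄| ^ r) * (|x₁ - x₃| + |x₂ - x₄|) := by
            apply mul_le_mul _ hABd (abs_nonneg _)
            · apply mul_nonneg hLf'0
              have h1 := Real.rpow_nonneg (abs_nonneg x₁) r
              have h2 := Real.rpow_nonneg (abs_nonneg x₂) r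
              have h3 := Real.rpow_nonneg (abs_nonneg x₃) r
              have h4 := Real.rpow_nonneg (abs_nonneg x₄) r
              linarith
            · exact mul_le_mul_of_nonneg_left (by linarith) hLf'0
    calc |((x₁ - x₂) + (x₃ - x₄)) / 2 * (deriv f A - deriv f B)|
        = |((x₁ - x₂) + (x₃ - x₄)) / 2| * |deriv f A - deriv f B| := abs_mul _ _
      _ ≤ (|x₁ - x₂| + |x₃ - x₄|) / 2 *
          (Lf' * (1 + |x₁| ^ r + |x₂| ^ r + |x₃| ^ r + |x₄| ^ r) * (|x₁ - x₃| + |x₂ - x₄|)) := by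
          apply mul_le_mul _ hfAB (abs_nonneg _)
          · positivity
          · rw [abs_div, abs_two]
            apply div_le_div_of_nonneg_right ?_ (by norm_num)
            exact abs_add_le _ _
      _ = Lf' / 2 * (1 + |x₁| ^ r + |x₂| ^ r + |x₃| ^ r + |x₄| ^ r) *
            (|x₁ - x₂| + |x₃ - x₄|) * (|x₁ - x₃| + |x₂ - x₄|) := by ring
  · -- bound on deriv f ξ
    have hSA : |A| ^ r ≤ |x₁| ^ r + |x₂| ^ r := by
      have := aux_rpow r hr0 hA_mem.1 hA_mem.2
      linarith
    have hSB : |B| ^ r ≤ |x₃| ^ r + |x₄| ^ r := by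
      have := aux_rpow r hr0 hB_mem.1 hB_mem.2
      linarith
    have hdA := hderiv A
    have hdB := hderiv B
    calc |deriv f ξ| = |(deriv f A + deriv f B) / 2| := by rw [hξeq]
      _ ≤ (|deriv f A| + |deriv f B|) / 2 := by
          rw [abs_div, abs_two]
          apply div_le_div_of_nonneg_right (abs_add_le _ _) (by norm_num)
      _ ≤ Lf * (1 + |A| ^ r + |B| ^ r) := by linarith
      _ ≤ Lf * (1 + |x₁| ^ r + |x₂| ^ r + |x₃| ^ r + |x₄| ^ r) := by
          apply mul_le_mul_of_nonneg_left (by linarith) hLf0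
end
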